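/- There is no universal constant C > 0 such that for all n, all nonnegative x_1,...,x_n, and equal weights α_i = 1/n, one has (1/n)∑ x_i − ∏ x_i^{1/n} ≤ C · ∑ (1/n)(x_i^{1/2} − (1/n)∑_k x_k^{1/2})^2. Specifically, taking x_1 = 0 and x_2 = ... = x_n = 1, the ratio of the AM-GM gap to the variance of x^{1/2} tends to infinity as n → ∞. -/

import Mathlib

open Finset

lemma sum_if_aux (n : ℕ) [NeZero n] (a b : ℝ) :
    ∑ i : Fin n, (if i = 0 then a else b) = a + ((n : ℝ) - 1) * b := by
  have : ∀ i : Fin n, (if i = 0 then a else b) = b + (if i = 0 then a - b else 0) := by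
    intro i; split <;> ring
  simp only [this, Finset.sum_add_distrib, Finset.sum_const, Finset.card_univ,
    Fintype.card_fin, nsmul_eq_mul, Finset.sum_ite_eq' Finset.univ (0 : Fin n),
    Finset.mem_univ, if_true]
  ring

theorem no_universal_constant :
    ¬ ∃ C : ℝ, 0 < C ∧ ∀ (n : ℕ), 0 < n → ∀ x : Fin n → ℝ, (∀ i, 0 ≤ x i) →
      (1 / n) * ∑ i, x i - ∏ i, x i ^ ((1 : ℝ) / n) ≤
        C * ∑ i, (1 / n) * (x i ^ ((1 : ℝ) / 2) - (1 / n) * ∑ k, x k ^ ((1 : ℝ) / 2)) ^ 2 := by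
  rintro ⟨C, hC, h⟩
  set n : ℕ := ⌈C⌉₊ + 2 with hn_def
  have hn : 0 < n := by positivity
  haveI : NeZero n := ⟨hn.ne'⟩
  set x : Fin n → ℝ := fun i => if i = 0 then 0 else 1 with hx_def
  have hx0 : ∀ i, 0 ≤ x i := by intro i; simp only [hx_def]; split <;> norm_num
  have h2 := h n hn x hx0
  have hNpos : (0 : ℝ) < (n : ℝ) := by exact_mod_cast hn
  -- rpow with exponent 1/2 fixes x
  have hx2 : ∀ i, x i ^ ((1 : ℝ) / 2) = x i := by
    intro i; simp only [hx_def]; split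
    · rw [Real.zero_rpow (by norm_num)]
    · rw [Real.one_rpow]
  have hsum : ∑ i, x i = (n : ℝ) - 1 := by
    simp only [hx_def, sum_if_aux]; ring
  have hprod : ∏ i, x i ^ ((1 : ℝ) / n) = 0 := by
    apply Finset.prod_eq_zero (Finset.mem_univ (0 : Fin n))
    simp only [hx_def, if_pos rfl]
    rw [Real.zero_rpow (by positivity)]
  simp only [hx2, hsum, hprod] at h2
  set m : ℝ := 1 / (n : ℝ) * ((n : ℝ) - 1) with hm
  have hsq : ∑ i, 1 / (n : ℝ) * (x i - m) ^ 2
      = 1 / (n : ℝ) * (m ^ 2 + ((n : ℝ) - 1) * (1 - m) ^ 2) := by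
    rw [← Finset.mul_sum]
    congr 1
    have : ∀ i : Fin n, (x i - m) ^ 2 = (if i = 0 then m ^ 2 else (1 - m) ^ 2) := by
      intro i; simp only [hx_def]; split <;> ring
    simp only [this, sum_if_aux]
  rw [hsq] at h2
  -- h2 : 1/n * (n-1) - 0 ≤ C * (1/n * (m^2 + (n-1)*(1-m)^2))
  have hN2 : (2 : ℝ) ≤ (n : ℝ) := by
    have : 2 ≤ n := Nat.le_add_left 2 ⌈C⌉₊
    exact_mod_cast this
  have hCn : C < (n : ℝ) := by
    have h1 : C ≤ (⌈C⌉₊ : ℝ) := Nat.le_ceil C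
    have h2' : ((⌈C⌉₊ : ℝ) + 1) ≤ (n : ℝ) := by
      have : (⌈C⌉₊ + 1 : ℕ) ≤ n := by omega
      exact_mod_cast this
    linarith
  have hm' : (1 - m) = 1 / (n : ℝ) := by
    field_simp [hm]
    linear_combination (-(n:ℝ)) * hm + (-((n:ℝ) - 1)) * (mul_one_div_cancel (ne_of_gt hNpos))
  rw [hm'] at h2
  have hexp : m ^ 2 + ((n : ℝ) - 1) * (1 / (n : ℝ)) ^ 2 = ((n : ℝ) - 1) / (n : ℝ) := by
    rw [hm]; field_simp; ring
  rw [hexp] at h2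
  -- h2 : 1/n*(n-1) - 0 ≤ C * (1/n * ((n-1)/n))
  have hne : (n : ℝ) ≠ 0 := ne_of_gt hNpos
  have key : (n : ℝ) ≤ C := by
    have h3 : ((n : ℝ) - 1) / (n : ℝ) ≤ C * (((n : ℝ) - 1) / (n : ℝ) ^ 2) := by
      have e1 : 1 / (n : ℝ) * ((n : ℝ) - 1) - 0 = ((n : ℝ) - 1) / (n : ℝ) := by ring
      have e2 : C * (1 / (n : ℝ) * (((n : ℝ) - 1) / (n : ℝ))) = C * (((n : ℝ) - 1) / (n : ℝ) ^ 2) := by ring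
      linarith [h2]
    have hn2 : (0:ℝ) < (n : ℝ) ^ 2 := by positivity
    have h3' : ((n : ℝ) - 1) * (n : ℝ) ≤ C * ((n : ℝ) - 1) := by
      calc ((n : ℝ) - 1) * (n : ℝ) = (((n : ℝ) - 1) / (n : ℝ)) * (n : ℝ) ^ 2 := by
            field_simp
        _ ≤ (C * (((n : ℝ) - 1) / (n : ℝ) ^ 2)) * (n : ℝ) ^ 2 :=
            mul_le_mul_of_nonneg_right h3 (le_of_lt hn2)
        _ = C * ((n : ℝ) - 1) := by field_simp
    nlinarith [h3', hN2]
  linarith
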